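/- arXiv:2108.13707 — 4 statements merged into one kernel-verified Lean document; each statement's English description precedes it below -/
import Mathlib

section
/- Let Z₁,...,Z_q be independent ℝ^{d_z}-valued Gaussian random vectors, Z_j ~ N(0, Σ_j) with each Σ_j positive definite, let ξ_1,...,ξ_q > 0, and let A be a positive definite d_z×d_z matrix. Define, for each sign vector g ∈ {-1,1}^q, T(g) = ‖Σ_{j=1}^q g_j √ξ_j Z_j‖_A, where ‖u‖_A = √(uᵀAu). Then for all g, T(g) = T(-g) surely, and for any g, g' with g' ∉ {g,-g}, P(T(g) = T(g')) = 0. -/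
open Matrix MeasureTheory ProbabilityTheory Function
open scoped ENNReal NNReal


lemma pi_null_of_slice_null {ι : Type*} [Fintype ι] [DecidableEq ι] {π : ι → Type*}
    [∀ i, MeasurableSpace (π i)] [Nonempty (∀ i, π i)]
    (m : ∀ i, Measure (π i)) [∀ i, SigmaFinite (m i)]
    {S : Set (∀ i, π i)} (hS : MeasurableSet S) (k : ι)
    (h : ∀ x : ∀ i, π i, m k {t | Function.update x k t ∈ S} = 0) :
    Measure.pi m S = 0 := by
  obtain ⟨x₀⟩ := (inferInstance : Nonempty (∀ i, π i))
  have hf : Measurable (S.indicator (1 : (∀ i, π i) → ℝ≥0∞)) := measurable_one.indicator hS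
  rw [← lintegral_indicator_one hS, lintegral_eq_lmarginal_univ x₀,
    show (Finset.univ : Finset ι) = insert k (Finset.univ.erase k) from
      (Finset.insert_erase (Finset.mem_univ k)).symm,
    lmarginal_insert' _ hf (Finset.notMem_erase k _)]
  have hzero : (fun x => ∫⁻ t, S.indicator 1 (Function.update x k t) ∂m k)
      = fun _ => (0 : ℝ≥0∞) := by
    funext x
    have hmeas : MeasurableSet {t | Function.update x k t ∈ S} :=
      (measurable_update x) hS
    calc ∫⁻ t, S.indicator 1 (Function.update x k t) ∂m k
        = ∫⁻ t, ({t | Function.update x k t ∈ S}).indicator 1 t ∂m k := by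
          refine lintegral_congr fun t => ?_
          by_cases ht : Function.update x k t ∈ S <;> simp [Set.indicator_apply, ht]
      _ = m k {t | Function.update x k t ∈ S} := lintegral_indicator_one hmeas
      _ = 0 := h x
  rw [hzero]
  simp [MeasureTheory.lmarginal]

lemma measurable_dotProduct_right {n : ℕ} (b : Fin n → ℝ) :
    Measurable fun x : Fin n → ℝ => b ⬝ᵥ x := by
  unfold dotProduct
  exact Finset.measurable_sum _ fun i _ => by fun_prop

lemma measurable_mulVec {n : ℕ} (L : Matrix (Fin n) (Fin n) ℝ) :
    Measurable fun x : Fin n → ℝ => L *ᵥ x :=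
  measurable_pi_lambda _ fun i => measurable_dotProduct_right (L i)

lemma gaussianReal_singleton (a : ℝ) : gaussianReal 0 1 {a} = 0 :=
  gaussianReal_absolutelyContinuous 0 one_ne_zero (measure_singleton a)

lemma gaussian_pi_singleton {dz : ℕ} (hdz : 0 < dz) (a : Fin dz → ℝ) :
    (Measure.pi fun _ : Fin dz => gaussianReal 0 1) {a} = 0 := by
  rw [show ({a} : Set (Fin dz → ℝ)) = Set.pi Set.univ (fun i => {a i}) by
      ext x; simp [funext_iff],
    Measure.pi_pi]
  exact Finset.prod_eq_zero (Finset.mem_univ (⟨0, hdz⟩ : Fin dz))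
    (gaussianReal_singleton _)

lemma gaussian_pi_hyperplane {dz : ℕ} {b : Fin dz → ℝ} (hb : b ≠ 0) (c : ℝ) :
    (Measure.pi fun _ : Fin dz => gaussianReal 0 1) {x | b ⬝ᵥ x = c} = 0 := by
  obtain ⟨i₀, hi₀⟩ : ∃ i, b i ≠ 0 := by
    by_contra h
    push_neg at h
    exact hb (funext h)
  have hS : MeasurableSet {x : Fin dz → ℝ | b ⬝ᵥ x = c} :=
    (measurable_dotProduct_right b) (measurableSet_singleton c)
  refine pi_null_of_slice_null _ hS i₀ fun x => ?_
  have hexp : ∀ t : ℝ, b ⬝ᵥ Function.update x i₀ t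
      = b i₀ * t + ∑ i ∈ Finset.univ \ {i₀}, b i * x i := by
    intro t
    unfold dotProduct
    rw [show (fun i => b i * Function.update x i₀ t i)
        = Function.update (fun i => b i * x i) i₀ (b i₀ * t) by
      funext i
      rcases eq_or_ne i i₀ with rfl | hne
      · simp
      · simp [Function.update_of_ne hne]]
    exact Finset.sum_update_of_mem (Finset.mem_univ i₀) (fun i => b i * x i) (b i₀ * t)
  have hsub : {t : ℝ | b ⬝ᵥ Function.update x i₀ t = c}
      ⊆ {(c - ∑ i ∈ Finset.univ \ {i₀}, b i * x i) / b i₀} := by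
    intro t ht
    simp only [Set.mem_setOf_eq, hexp t] at ht
    have : t = (c - ∑ i ∈ Finset.univ \ {i₀}, b i * x i) / b i₀ := by
      rw [eq_div_iff hi₀]; linarith
    simpa using this
  exact measure_mono_null hsub (gaussianReal_singleton _)

lemma map_mulVec_singleton {dz : ℕ} (hdz : 0 < dz) (L : Matrix (Fin dz) (Fin dz) ℝ)
    (hL : IsUnit L.det) (a : Fin dz → ℝ) :
    (Measure.map (fun x => L *ᵥ x) (Measure.pi fun _ : Fin dz => gaussianReal 0 1)) {a} = 0 := by
  rw [Measure.map_apply (measurable_mulVec L) (measurableSet_singleton a)]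
  refine measure_mono_null ?_ (gaussian_pi_singleton hdz (L⁻¹ *ᵥ a))
  intro y hy
  simp only [Set.mem_preimage, Set.mem_singleton_iff] at hy ⊢
  rw [← hy, Matrix.mulVec_mulVec, Matrix.nonsing_inv_mul _ hL, Matrix.one_mulVec]

lemma map_mulVec_hyperplane {dz : ℕ} (L : Matrix (Fin dz) (Fin dz) ℝ)
    (hL : IsUnit L.det) {b : Fin dz → ℝ} (hb : b ≠ 0) (c : ℝ) :
    (Measure.map (fun x => L *ᵥ x) (Measure.pi fun _ : Fin dz => gaussianReal 0 1))
      {x | b ⬝ᵥ x = c} = 0 := by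
  have hS : MeasurableSet {x : Fin dz → ℝ | b ⬝ᵥ x = c} :=
    (measurable_dotProduct_right b) (measurableSet_singleton c)
  rw [Measure.map_apply (measurable_mulVec L) hS]
  have hbL : b ᵥ* L ≠ 0 := by
    intro h0
    apply hb
    have := congrArg (fun w => w ᵥ* L⁻¹) h0
    simpa [Matrix.vecMul_vecMul, Matrix.mul_nonsing_inv _ hL] using this
  have : (fun x => L *ᵥ x) ⁻¹' {x | b ⬝ᵥ x = c} = {y | (b ᵥ* L) ⬝ᵥ y = c} := by
    ext y; simp [Matrix.dotProduct_mulVec]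
  rw [this]
  exact gaussian_pi_hyperplane hbL c

lemma sum_smul_update {q dz : ℕ} (a : Fin q → ℝ) (x : Fin q → Fin dz → ℝ) (k : Fin q)
    (t : Fin dz → ℝ) :
    ∑ j, a j • Function.update x k t j
      = a k • t + ∑ j ∈ Finset.univ \ {k}, a j • x j := by
  rw [show (fun j => a j • Function.update x k t j)
      = Function.update (fun j => a j • x j) k (a k • t) by
    funext j
    rcases eq_or_ne j k with rfl | hne
    · simp
    · simp [Function.update_of_ne hne]]
  exact Finset.sum_update_of_mem (Finset.mem_univ k) (fun j => a j • x j) (a k • t)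

lemma measurable_quad {q dz : ℕ} (A : Matrix (Fin dz) (Fin dz) ℝ)
    {f g : (Fin q → Fin dz → ℝ) → (Fin dz → ℝ)} (hf : Measurable f) (hg : Measurable g) :
    Measurable fun z => f z ⬝ᵥ A *ᵥ g z := by
  simp only [Matrix.mulVec, dotProduct]
  exact Finset.measurable_sum _ fun i _ =>
    ((measurable_pi_apply i).comp hf).mul
      (Finset.measurable_sum _ fun k _ => ((measurable_pi_apply k).comp hg).const_mul _)

lemma joint_law {Ω : Type*} [MeasurableSpace Ω] (μ : Measure Ω) [IsProbabilityMeasure μ]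
    {q dz : ℕ} (Z : Fin q → Ω → (Fin dz → ℝ)) (hmeas : ∀ j, Measurable (Z j))
    (hindep : iIndepFun Z μ) :
    μ.map (fun ω j => Z j ω) = Measure.pi (fun j => μ.map (Z j)) := by
  haveI : ∀ j, IsProbabilityMeasure (μ.map (Z j)) :=
    fun j => Measure.isProbabilityMeasure_map (hmeas j).aemeasurable
  refine (Measure.pi_eq fun s hs => ?_).symm
  rw [Measure.map_apply (measurable_pi_lambda _ hmeas) (MeasurableSet.univ_pi hs)]
  have hpre : (fun ω j => Z j ω) ⁻¹' (Set.pi Set.univ s) = ⋂ j, Z j ⁻¹' s j := by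
    ext ω; simp [Set.mem_pi]
  rw [hpre, hindep.meas_iInter fun j => ⟨s j, hs j, rfl⟩]
  exact Finset.prod_congr rfl fun j _ => (Measure.map_apply (hmeas j) (hs j)).symm




set_option maxHeartbeats 2000000 in
/-- For independent nondegenerate centered Gaussian cluster scores `Z_j ~ N(0, Σ_j)`
(encoded as pushforwards of an i.i.d. standard Gaussian vector by invertible matrices `L_j`),
positive weights `ξ_j` and a positive definite weight matrix `A`, the statistics
`T(g) = ‖Σ_j g_j √ξ_j Z_j‖_A` satisfy `T(g) = T(-g)` surely, and for `g' ∉ {g, -g}`,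
`P(T(g) = T(g')) = 0`. -/
theorem stmt7 {Ω : Type*} [MeasurableSpace Ω] (μ : Measure Ω) [IsProbabilityMeasure μ]
    (q dz : ℕ) (hdz : 0 < dz)
    (Z : Fin q → Ω → (Fin dz → ℝ)) (hmeas : ∀ j, Measurable (Z j))
    (hindep : iIndepFun Z μ)
    (L : Fin q → Matrix (Fin dz) (Fin dz) ℝ) (hL : ∀ j, IsUnit (L j).det)
    (hgauss : ∀ j, Measure.map (Z j) μ =
      Measure.map (fun x => (L j) *ᵥ x)
        (Measure.pi fun _ : Fin dz => gaussianReal 0 1))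
    (ξ : Fin q → ℝ) (hξ : ∀ j, 0 < ξ j)
    (A : Matrix (Fin dz) (Fin dz) ℝ) (hA : A.PosDef) :
    ∀ T : (Fin q → Bool) → Ω → ℝ,
      (T = fun g ω => Real.sqrt
        ((∑ j, ((if g j then (1 : ℝ) else -1) * Real.sqrt (ξ j)) • Z j ω) ⬝ᵥ
          (A *ᵥ ∑ j, ((if g j then (1 : ℝ) else -1) * Real.sqrt (ξ j)) • Z j ω))) →
      (∀ g ω, T g ω = T (fun j => !(g j)) ω) ∧
      (∀ g g' : Fin q → Bool, g' ≠ g → g' ≠ (fun j => !(g j)) →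
        μ {ω | T g ω = T g' ω} = 0) := by
  intro T hT
  subst hT
  -- basic facts
  have hcoef : ∀ (b : Bool) (j : Fin q), ((if b then (1:ℝ) else -1) * Real.sqrt (ξ j)) ≠ 0 :=
    fun b j => mul_ne_zero (by cases b <;> norm_num)
      (ne_of_gt (Real.sqrt_pos.mpr (hξ j)))
  have hAt : Aᵀ = A := by simpa [Matrix.IsSymm] using hA.1
  have hsymm : ∀ x y : Fin dz → ℝ, x ⬝ᵥ A *ᵥ y = y ⬝ᵥ A *ᵥ x := by
    intro x y
    have h1 : x ᵥ* A = A *ᵥ x := by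
      conv_lhs => rw [← hAt]
      rw [Matrix.vecMul_transpose]
    rw [Matrix.dotProduct_mulVec, h1]
    exact dotProduct_comm _ _
  have hQnn : ∀ x : Fin dz → ℝ, 0 ≤ x ⬝ᵥ A *ᵥ x := fun x => by
    simpa using hA.posSemidef.dotProduct_mulVec_nonneg x
  have hQpos : ∀ x : Fin dz → ℝ, x ≠ 0 → 0 < x ⬝ᵥ A *ᵥ x := fun x hx => by
    simpa using hA.dotProduct_mulVec_pos hx
  constructor
  · intro g ω
    have hsum : (∑ j, ((if !(g j) then (1:ℝ) else -1) * Real.sqrt (ξ j)) • Z j ω)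
        = -∑ j, ((if g j then (1:ℝ) else -1) * Real.sqrt (ξ j)) • Z j ω := by
      rw [← Finset.sum_neg_distrib]
      refine Finset.sum_congr rfl fun j _ => ?_
      cases hgj : g j <;> simp [neg_smul, neg_mul]
    simp only [hsum, Matrix.mulVec_neg, dotProduct_neg, neg_dotProduct, neg_neg]
  · intro g g' hne hnne
    classical
    obtain ⟨j₀, hj₀⟩ : ∃ j, g j = g' j := by
      by_contra hcon
      push_neg at hcon
      refine hnne (funext fun j => ?_)
      have hcj := hcon j
      cases hgj : g j <;> cases hg'j : g' j <;> simp_all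
    obtain ⟨k₀, hk₀⟩ : ∃ j, ¬ (g j = g' j) := by
      by_contra hcon
      push_neg at hcon
      exact hne (funext fun j => (hcon j).symm)
    set d : Fin q → ℝ :=
      fun j => if g j = g' j then (if g j then (1:ℝ) else -1) * Real.sqrt (ξ j) else 0 with hd_def
    set e : Fin q → ℝ :=
      fun j => if g j = g' j then 0 else (if g j then (1:ℝ) else -1) * Real.sqrt (ξ j) with he_def
    set u : (Fin q → Fin dz → ℝ) → (Fin dz → ℝ) := fun z => ∑ j, d j • z j with hu_def
    set v : (Fin q → Fin dz → ℝ) → (Fin dz → ℝ) := fun z => ∑ j, e j • z j with hv_def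
    have hde : ∀ j, ((if g j then (1:ℝ) else -1) * Real.sqrt (ξ j)) • (· : Fin dz → ℝ) = 0 →
        True := fun _ _ => trivial
    have hW : ∀ z : Fin q → Fin dz → ℝ,
        (∑ j, ((if g j then (1:ℝ) else -1) * Real.sqrt (ξ j)) • z j) = u z + v z := by
      intro z
      rw [hu_def, hv_def]
      simp only
      rw [← Finset.sum_add_distrib]
      refine Finset.sum_congr rfl fun j _ => ?_
      rw [← add_smul]
      congr 1
      by_cases h : g j = g' j <;> simp [hd_def, he_def, h]
    have hW' : ∀ z : Fin q → Fin dz → ℝ,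
        (∑ j, ((if g' j then (1:ℝ) else -1) * Real.sqrt (ξ j)) • z j) = u z - v z := by
      intro z
      rw [hu_def, hv_def]
      simp only
      rw [← Finset.sum_sub_distrib]
      refine Finset.sum_congr rfl fun j _ => ?_
      rw [← sub_smul]
      congr 1
      by_cases h : g j = g' j
      · simp [hd_def, he_def, h]
      · have hgg' : g' j = !(g j) := by
          cases hgj : g j <;> cases hg'j : g' j <;> simp_all
        rw [hd_def, he_def]
        simp only [h, if_false, if_neg h, zero_sub, hgg']
        cases g j <;> norm_num
    -- measurability
    have hu_meas : Measurable u := by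
      rw [hu_def]
      exact Finset.measurable_sum _ fun j _ => by fun_prop
    have hv_meas : Measurable v := by
      rw [hv_def]
      exact Finset.measurable_sum _ fun j _ => by fun_prop
    have hQuv_meas : Measurable fun z => u z ⬝ᵥ A *ᵥ v z := measurable_quad A hu_meas hv_meas
    set Sev : Set (Fin q → Fin dz → ℝ) := {z | u z ⬝ᵥ A *ᵥ v z = 0} with hSev_def
    have hSev_meas : MeasurableSet Sev := hQuv_meas (measurableSet_singleton 0)
    have hS₀_meas : MeasurableSet {z | u z = 0} := hu_meas (measurableSet_singleton 0)
    have hJ : Measurable (fun ω j => Z j ω) := measurable_pi_lambda _ hmeas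
    have hν : ∀ j, IsProbabilityMeasure (μ.map (Z j)) :=
      fun j => Measure.isProbabilityMeasure_map (hmeas j).aemeasurable
    haveI := hν
    -- reduce event to Sev
    have hsub : {ω | Real.sqrt
        ((∑ j, ((if g j then (1 : ℝ) else -1) * Real.sqrt (ξ j)) • Z j ω) ⬝ᵥ
          (A *ᵥ ∑ j, ((if g j then (1 : ℝ) else -1) * Real.sqrt (ξ j)) • Z j ω))
        = Real.sqrt
        ((∑ j, ((if g' j then (1 : ℝ) else -1) * Real.sqrt (ξ j)) • Z j ω) ⬝ᵥ
          (A *ᵥ ∑ j, ((if g' j then (1 : ℝ) else -1) * Real.sqrt (ξ j)) • Z j ω))}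
        ⊆ (fun ω j => Z j ω) ⁻¹' Sev := by
      intro ω hω
      simp only [Set.mem_setOf_eq] at hω
      have hEq := (Real.sqrt_inj (hQnn _) (hQnn _)).mp hω
      rw [hW (fun j => Z j ω), hW' (fun j => Z j ω)] at hEq
      have expand : (u (fun j => Z j ω) + v (fun j => Z j ω)) ⬝ᵥ
            A *ᵥ (u (fun j => Z j ω) + v (fun j => Z j ω))
          - (u (fun j => Z j ω) - v (fun j => Z j ω)) ⬝ᵥ
            A *ᵥ (u (fun j => Z j ω) - v (fun j => Z j ω))
          = 4 * (u (fun j => Z j ω) ⬝ᵥ A *ᵥ v (fun j => Z j ω)) := by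
        rw [show (u (fun j => Z j ω) - v (fun j => Z j ω)) = u _ + (- v (fun j => Z j ω)) by abel]
        simp only [dotProduct_add, add_dotProduct, Matrix.mulVec_add, Matrix.mulVec_neg,
          dotProduct_neg, neg_dotProduct, neg_neg]
        rw [hsymm (v (fun j => Z j ω)) (u (fun j => Z j ω))]
        ring
      simp only [Set.mem_preimage, hSev_def, Set.mem_setOf_eq]
      have h4 : (4 : ℝ) * (u (fun j => Z j ω) ⬝ᵥ A *ᵥ v (fun j => Z j ω)) = 0 := by
        rw [← expand, hEq]; ring
      linarith
    refine measure_mono_null hsub ?_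
    rw [show μ ((fun ω j => Z j ω) ⁻¹' Sev) = (μ.map (fun ω j => Z j ω)) Sev from
      (Measure.map_apply hJ hSev_meas).symm, joint_law μ Z hmeas hindep]
    -- split into S₀ and S₁
    refine measure_mono_null
      (show Sev ⊆ {z | u z = 0} ∪ (Sev ∩ {z | u z ≠ 0}) from fun z hz => by
        by_cases h : u z = 0
        · exact Or.inl h
        · exact Or.inr ⟨hz, h⟩)
      (measure_union_null ?_ ?_)
    · -- S₀
      refine pi_null_of_slice_null _ hS₀_meas j₀ fun x => ?_
      have hd₀ : d j₀ ≠ 0 := by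
        rw [hd_def]
        simp only [hj₀, if_true]
        exact hcoef _ _
      have hupd : ∀ t : Fin dz → ℝ, u (Function.update x j₀ t)
          = d j₀ • t + ∑ j ∈ Finset.univ \ {j₀}, d j • x j := fun t => by
        rw [hu_def]
        exact sum_smul_update d x j₀ t
      have hνnull : (μ.map (Z j₀))
          {(d j₀)⁻¹ • (-(∑ j ∈ Finset.univ \ {j₀}, d j • x j))} = 0 := by
        rw [hgauss j₀]
        exact map_mulVec_singleton hdz (L j₀) (hL j₀) _
      refine measure_mono_null ?_ hνnull
      intro t ht
      simp only [Set.mem_setOf_eq, hupd t] at ht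
      have h1 : d j₀ • t = -(∑ j ∈ Finset.univ \ {j₀}, d j • x j) :=
        eq_neg_of_add_eq_zero_left ht
      have h2 : t = (d j₀)⁻¹ • (-(∑ j ∈ Finset.univ \ {j₀}, d j • x j)) := by
        rw [← h1, inv_smul_smul₀ hd₀]
      simpa [Set.mem_singleton_iff] using h2
    · -- S₁
      refine pi_null_of_slice_null _
        (hSev_meas.inter (hu_meas (measurableSet_singleton 0)).compl) k₀ fun x => ?_
      have hdk : d k₀ = 0 := by rw [hd_def]; simp [hk₀]
      have hek : e k₀ ≠ 0 := by
        rw [he_def]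
        simp only [hk₀, if_false]
        exact hcoef _ _
      obtain ⟨u0, hu0d⟩ : ∃ r, ∑ j ∈ Finset.univ \ {k₀}, d j • x j = r := ⟨_, rfl⟩
      obtain ⟨rv, hrvd⟩ : ∃ r, ∑ j ∈ Finset.univ \ {k₀}, e j • x j = r := ⟨_, rfl⟩
      have hu0 : ∀ t : Fin dz → ℝ, u (Function.update x k₀ t) = u0 := fun t => by
        simp only [hu_def]
        rw [sum_smul_update d x k₀ t, hdk, hu0d]
        simp
      have hv0 : ∀ t : Fin dz → ℝ, v (Function.update x k₀ t) = e k₀ • t + rv := fun t => by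
        simp only [hv_def]
        rw [sum_smul_update e x k₀ t, hrvd]
      by_cases h0 : u0 = 0
      · refine measure_mono_null (show _ ⊆ (∅ : Set (Fin dz → ℝ)) from ?_) measure_empty
        intro t ht
        obtain ⟨-, hne0⟩ := ht
        exact absurd (by rw [hu0 t, h0]) hne0
      · have hAu0 : A *ᵥ u0 ≠ 0 := by
          intro hA0
          have := hQpos u0 h0
          rw [hA0, dotProduct_zero] at this
          exact lt_irrefl 0 this
        have hbb : e k₀ • (A *ᵥ u0) ≠ 0 := smul_ne_zero hek hAu0
        have hνnull : (μ.map (Z k₀))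
            {t | (e k₀ • (A *ᵥ u0)) ⬝ᵥ t = -(u0 ⬝ᵥ A *ᵥ rv)} = 0 := by
          rw [hgauss k₀]
          exact map_mulVec_hyperplane (L k₀) (hL k₀) hbb _
        refine measure_mono_null ?_ hνnull
        intro t ht
        obtain ⟨hz, -⟩ := ht
        simp only [hSev_def, Set.mem_setOf_eq] at hz
        rw [hu0 t, hv0 t] at hz
        have hlin : u0 ⬝ᵥ A *ᵥ (e k₀ • t + rv)
            = (e k₀ • (A *ᵥ u0)) ⬝ᵥ t + u0 ⬝ᵥ A *ᵥ rv := by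
          rw [Matrix.mulVec_add, dotProduct_add, Matrix.mulVec_smul, dotProduct_smul,
            smul_dotProduct]
          congr 1
          rw [smul_eq_mul, smul_eq_mul]
          congr 1
          rw [hsymm u0 t]
          exact dotProduct_comm _ _
        rw [hlin] at hz
        simp only [Set.mem_setOf_eq]
        linarith
end

section
/- Let Z₁,...,Z_q be independent nondegenerate ℝ^{d_z}-valued Gaussian vectors, let ξ_j > 0, let A_z be positive definite, let Q̃ ∈ ℝ^{d_z} with ‖Q̃‖_{A_z} > 0 (writing Q̃ = Q_{Z̃X}μ), and let a_j ≥ 0 with Σ_j ξ_j a_j = 1 and a_j > 0 exactly on a subset J_s. For g ∈ {-1,1}^q define AR_∞(g) = ‖Σ_j g_j √ξ_j Z_j + (Σ_j ξ_j g_j a_j) Q̃‖_{A_z}. Let G_s = {g : g not constant on J_s}. Then P(AR_∞(ι) > max_{g ∈ G_s} AR_∞(g)) → 1 as ‖Q̃‖₂ → ∞. -/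
open Matrix MeasureTheory ProbabilityTheory Finset

/-- Euclidean-style facts for `E w = √(∑ w i ^ 2)`. -/
lemma euc_triangle {n : ℕ} (u v : Fin n → ℝ) :
    Real.sqrt (∑ i, (u i + v i) ^ 2) ≤
      Real.sqrt (∑ i, u i ^ 2) + Real.sqrt (∑ i, v i ^ 2) := by
  have h1 : (0:ℝ) ≤ ∑ i, u i ^ 2 := Finset.sum_nonneg fun i _ => sq_nonneg _
  have h2 : (0:ℝ) ≤ ∑ i, v i ^ 2 := Finset.sum_nonneg fun i _ => sq_nonneg _
  have hcs : (∑ i, u i * v i) ≤ Real.sqrt (∑ i, u i ^ 2) * Real.sqrt (∑ i, v i ^ 2) := by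
    have := Finset.sum_mul_sq_le_sq_mul_sq Finset.univ u v
    have h' : (∑ i, u i * v i) ≤ |∑ i, u i * v i| := le_abs_self _
    refine h'.trans ?_
    rw [← Real.sqrt_sq_eq_abs, ← Real.sqrt_mul h1]
    exact Real.sqrt_le_sqrt this
  rw [← Real.sqrt_sq (by positivity : (0:ℝ) ≤ Real.sqrt (∑ i, u i ^ 2) + Real.sqrt (∑ i, v i ^ 2))]
  apply Real.sqrt_le_sqrt
  have e1 : (∑ i, (u i + v i) ^ 2) = (∑ i, u i ^ 2) + 2 * (∑ i, u i * v i) + ∑ i, v i ^ 2 := by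
    simp only [add_sq, Finset.sum_add_distrib, Finset.mul_sum, mul_assoc]
  rw [e1, add_sq, Real.sq_sqrt h1, Real.sq_sqrt h2]
  nlinarith [hcs]

open scoped MatrixOrder in
lemma aux_norm {dz : ℕ} {A : Matrix (Fin dz) (Fin dz) ℝ} (hA : A.PosDef) :
    ∃ c : ℝ, 0 < c ∧
      (∀ u v : Fin dz → ℝ, Real.sqrt ((u + v) ⬝ᵥ (A *ᵥ (u + v))) ≤
          Real.sqrt (u ⬝ᵥ (A *ᵥ u)) + Real.sqrt (v ⬝ᵥ (A *ᵥ v))) ∧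
      (∀ (t : ℝ) (v : Fin dz → ℝ), Real.sqrt ((t • v) ⬝ᵥ (A *ᵥ (t • v))) =
          |t| * Real.sqrt (v ⬝ᵥ (A *ᵥ v))) ∧
      (∀ v : Fin dz → ℝ, c * ‖v‖ ≤ Real.sqrt (v ⬝ᵥ (A *ᵥ v))) := by
  classical
  obtain ⟨B, hBherm, hBB, hBkey⟩ :
      ∃ B : Matrix (Fin dz) (Fin dz) ℝ, B.IsHermitian ∧ B * B = A ∧
        ∀ v : Fin dz → ℝ, v ⬝ᵥ (A *ᵥ v) = ∑ i, (B *ᵥ v) i ^ 2 := by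
    refine ⟨(CFC.sqrt A), (CFC.sqrt_nonneg A).posSemidef.1, (CFC.sqrt_mul_sqrt_self A hA.posSemidef.nonneg), ?_⟩
    intro v
    have hsym : ∀ w : Fin dz → ℝ, w ᵥ* (CFC.sqrt A) = (CFC.sqrt A) *ᵥ w := by
      intro w
      conv_lhs => rw [← (CFC.sqrt_nonneg A).posSemidef.1,
        Matrix.conjTranspose_eq_transpose_of_trivial]
      rw [Matrix.vecMul_transpose]
    conv_lhs => rw [← (CFC.sqrt_mul_sqrt_self A hA.posSemidef.nonneg)]
    rw [← mulVec_mulVec, dotProduct_mulVec, hsym]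
    simp [dotProduct, sq]
  -- sup-norm is below the Euclidean-type norm
  have hEsup : ∀ w : Fin dz → ℝ, ‖w‖ ≤ Real.sqrt (∑ i, w i ^ 2) := by
    intro w
    rw [pi_norm_le_iff_of_nonneg (Real.sqrt_nonneg _)]
    intro i
    rw [Real.norm_eq_abs, ← Real.sqrt_sq_eq_abs]
    exact Real.sqrt_le_sqrt (Finset.single_le_sum (fun j _ => sq_nonneg (w j)) (Finset.mem_univ i))
  -- B is invertible
  have hdetB : IsUnit B.det := by
    have hdA : A.det ≠ 0 := ne_of_gt hA.det_pos
    have : B.det * B.det = A.det := by rw [← Matrix.det_mul, hBB]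
    exact isUnit_iff_ne_zero.mpr fun h => hdA (by rw [← this, h, mul_zero])
  have hinv : ∀ v : Fin dz → ℝ, B⁻¹ *ᵥ (B *ᵥ v) = v := by
    intro v
    rw [mulVec_mulVec, Matrix.nonsing_inv_mul B hdetB, one_mulVec]
  set K : ℝ := (∑ i, ∑ j, |B⁻¹ i j|) + 1 with hKdef
  have hK : 0 < K := by
    rw [hKdef]
    positivity
  have hbound : ∀ w : Fin dz → ℝ, ‖B⁻¹ *ᵥ w‖ ≤ K * ‖w‖ := by
    intro w
    rw [pi_norm_le_iff_of_nonneg (by positivity)]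
    intro i
    rw [Real.norm_eq_abs]
    calc |(B⁻¹ *ᵥ w) i| = |∑ j, B⁻¹ i j * w j| := rfl
      _ ≤ ∑ j, |B⁻¹ i j * w j| := Finset.abs_sum_le_sum_abs _ _
      _ ≤ ∑ j, |B⁻¹ i j| * ‖w‖ := by
          refine Finset.sum_le_sum fun j _ => ?_
          rw [abs_mul]
          exact mul_le_mul_of_nonneg_left ((Real.norm_eq_abs (w j)) ▸ norm_le_pi_norm w j)
            (abs_nonneg _)
      _ = (∑ j, |B⁻¹ i j|) * ‖w‖ := by rw [← Finset.sum_mul]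
      _ ≤ K * ‖w‖ := by
          refine mul_le_mul_of_nonneg_right ?_ (norm_nonneg _)
          have h1 : (∑ j, |B⁻¹ i j|) ≤ ∑ i', ∑ j, |B⁻¹ i' j| :=
            Finset.single_le_sum (f := fun i' => ∑ j, |B⁻¹ i' j|)
              (fun i' _ => Finset.sum_nonneg fun j _ => abs_nonneg _) (Finset.mem_univ i)
          linarith
  refine ⟨1 / K, by positivity, ?_, ?_, ?_⟩
  · intro u v
    rw [hBkey, hBkey, hBkey, mulVec_add]
    exact euc_triangle _ _
  · intro t v
    rw [hBkey, hBkey, mulVec_smul]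
    have : ∀ i, (t • (B *ᵥ v)) i ^ 2 = t ^ 2 * (B *ᵥ v) i ^ 2 := by
      intro i; simp [mul_pow]
    simp_rw [this]
    rw [← Finset.mul_sum, Real.sqrt_mul (sq_nonneg t), Real.sqrt_sq_eq_abs]
  · intro v
    rw [hBkey]
    have h1 : ‖v‖ ≤ K * Real.sqrt (∑ i, (B *ᵥ v) i ^ 2) := by
      calc ‖v‖ = ‖B⁻¹ *ᵥ (B *ᵥ v)‖ := by rw [hinv]
        _ ≤ K * ‖B *ᵥ v‖ := hbound _
        _ ≤ K * Real.sqrt (∑ i, (B *ᵥ v) i ^ 2) :=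
            mul_le_mul_of_nonneg_left (hEsup _) (le_of_lt hK)
    rw [div_mul_eq_mul_div, div_le_iff₀ hK] at *
    calc 1 * ‖v‖ = ‖v‖ := one_mul _
      _ ≤ K * Real.sqrt (∑ i, (B *ᵥ v) i ^ 2) := h1
      _ = Real.sqrt (∑ i, (B *ᵥ v) i ^ 2) * K := mul_comm _ _

lemma key_ineq {dz : ℕ} {A : Matrix (Fin dz) (Fin dz) ℝ} (c : ℝ)
    (Ntri : ∀ u v : Fin dz → ℝ, Real.sqrt ((u + v) ⬝ᵥ (A *ᵥ (u + v))) ≤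
        Real.sqrt (u ⬝ᵥ (A *ᵥ u)) + Real.sqrt (v ⬝ᵥ (A *ᵥ v)))
    (Nsmul : ∀ (t : ℝ) (v : Fin dz → ℝ), Real.sqrt ((t • v) ⬝ᵥ (A *ᵥ (t • v))) =
        |t| * Real.sqrt (v ⬝ᵥ (A *ᵥ v)))
    (Nlow : ∀ v : Fin dz → ℝ, c * ‖v‖ ≤ Real.sqrt (v ⬝ᵥ (A *ᵥ v)))
    (s t Qt : Fin dz → ℝ) (bg β : ℝ) (hbg : |bg| ≤ β) (hβ : β < 1)
    (hM : Real.sqrt (t ⬝ᵥ (A *ᵥ t)) + Real.sqrt (s ⬝ᵥ (A *ᵥ s)) < (1 - β) * (c * ‖Qt‖)) :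
    Real.sqrt ((s + bg • Qt) ⬝ᵥ (A *ᵥ (s + bg • Qt))) <
      Real.sqrt ((t + Qt) ⬝ᵥ (A *ᵥ (t + Qt))) := by
  have hQ := Nlow Qt
  have h2 : Real.sqrt ((s + bg • Qt) ⬝ᵥ (A *ᵥ (s + bg • Qt))) ≤
      Real.sqrt (s ⬝ᵥ (A *ᵥ s)) + |bg| * Real.sqrt (Qt ⬝ᵥ (A *ᵥ Qt)) := by
    calc Real.sqrt ((s + bg • Qt) ⬝ᵥ (A *ᵥ (s + bg • Qt)))
        ≤ Real.sqrt (s ⬝ᵥ (A *ᵥ s)) + Real.sqrt ((bg • Qt) ⬝ᵥ (A *ᵥ (bg • Qt))) := Ntri _ _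
      _ = Real.sqrt (s ⬝ᵥ (A *ᵥ s)) + |bg| * Real.sqrt (Qt ⬝ᵥ (A *ᵥ Qt)) := by rw [Nsmul]
  have h3 : Real.sqrt (Qt ⬝ᵥ (A *ᵥ Qt)) ≤
      Real.sqrt ((t + Qt) ⬝ᵥ (A *ᵥ (t + Qt))) + Real.sqrt (t ⬝ᵥ (A *ᵥ t)) := by
    have he : Qt = (t + Qt) + (-1 : ℝ) • t := by rw [neg_one_smul]; abel
    calc Real.sqrt (Qt ⬝ᵥ (A *ᵥ Qt))
        = Real.sqrt (((t + Qt) + (-1 : ℝ) • t) ⬝ᵥ (A *ᵥ ((t + Qt) + (-1 : ℝ) • t))) := by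
          rw [← he]
      _ ≤ Real.sqrt ((t + Qt) ⬝ᵥ (A *ᵥ (t + Qt))) +
            Real.sqrt (((-1 : ℝ) • t) ⬝ᵥ (A *ᵥ ((-1 : ℝ) • t))) := Ntri _ _
      _ = Real.sqrt ((t + Qt) ⬝ᵥ (A *ᵥ (t + Qt))) + Real.sqrt (t ⬝ᵥ (A *ᵥ t)) := by
          rw [Nsmul]; simp
  have hb' : |bg| * Real.sqrt (Qt ⬝ᵥ (A *ᵥ Qt)) ≤ β * Real.sqrt (Qt ⬝ᵥ (A *ᵥ Qt)) :=
    mul_le_mul_of_nonneg_right hbg (Real.sqrt_nonneg _)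
  have hQβ : (1 - β) * (c * ‖Qt‖) ≤ (1 - β) * Real.sqrt (Qt ⬝ᵥ (A *ᵥ Qt)) :=
    mul_le_mul_of_nonneg_left hQ (by linarith)
  nlinarith [Real.sqrt_nonneg (Qt ⬝ᵥ (A *ᵥ Qt))]

lemma babs_lt {q : ℕ} (ξ a : Fin q → ℝ) (hξ : ∀ j, 0 < ξ j) (ha : ∀ j, 0 ≤ a j)
    (hsum : ∑ j, ξ j * a j = 1) (Js : Finset (Fin q)) (haJs : ∀ j ∈ Js, 0 < a j)
    (g : Fin q → Bool) (hg : ¬ ∀ j ∈ Js, ∀ j' ∈ Js, g j = g j') :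
    |∑ j, ξ j * (if g j then (1 : ℝ) else -1) * a j| < 1 := by
  push_neg at hg
  obtain ⟨j0, hj0, j1, hj1, hne⟩ := hg
  have hex : (∃ jt ∈ Js, g jt = true) ∧ (∃ jf ∈ Js, g jf = false) := by
    cases hb0 : g j0 <;> cases hb1 : g j1
    · exact absurd (hb0.trans hb1.symm) hne
    · exact ⟨⟨j1, hj1, hb1⟩, ⟨j0, hj0, hb0⟩⟩
    · exact ⟨⟨j0, hj0, hb0⟩, ⟨j1, hj1, hb1⟩⟩
    · exact absurd (hb0.trans hb1.symm) hne
  obtain ⟨⟨jt, hjt, hgt⟩, ⟨jf, hjf, hgf⟩⟩ := hex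
  have hif_t : (if (true : Bool) then (1 : ℝ) else -1) = 1 := by norm_num
  have hif_f : (if (false : Bool) then (1 : ℝ) else -1) = -1 := by norm_num
  rw [abs_lt]
  constructor
  · have h : ∑ j, -(ξ j * a j) < ∑ j, ξ j * (if g j then (1 : ℝ) else -1) * a j := by
      refine Finset.sum_lt_sum (fun i _ => ?_) ⟨jt, Finset.mem_univ jt, ?_⟩
      · cases hgi : g i
        · rw [hif_f]
          exact le_of_eq (by ring)
        · rw [hif_t]
          nlinarith [mul_nonneg (hξ i).le (ha i)]
      · rw [hgt, hif_t]
        nlinarith [mul_pos (hξ jt) (haJs jt hjt)]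
    have hneg : (-1 : ℝ) = ∑ j, -(ξ j * a j) := by
      rw [Finset.sum_neg_distrib, hsum]
    linarith [h, hneg.le, hneg.ge]
  · have h : ∑ j, ξ j * (if g j then (1 : ℝ) else -1) * a j < ∑ j, ξ j * a j := by
      refine Finset.sum_lt_sum (fun i _ => ?_) ⟨jf, Finset.mem_univ jf, ?_⟩
      · cases hgi : g i
        · rw [hif_f]
          nlinarith [mul_nonneg (hξ i).le (ha i)]
        · rw [hif_t]
          exact le_of_eq (by ring)
      · rw [hgf, hif_f]
        nlinarith [mul_pos (hξ jf) (haJs jf hjf)]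
    linarith [h, hsum.le]

/-- Power of the bootstrap AR test: with independent nondegenerate centered Gaussian scores
`Z_j`, positive weights `ξ_j`, coefficients `a_j ≥ 0` with `Σ_j ξ_j a_j = 1` and `a_j > 0`
exactly on `J_s`, and positive definite `A_z`, the probability that
`AR_∞(ι) = ‖Σ_j √ξ_j Z_j + Q̃‖_{A_z}` exceeds `AR_∞(g)` for every sign vector `g` not constant
on `J_s` tends to one as `‖Q̃‖ → ∞`, where
`AR_∞(g) = ‖Σ_j g_j √ξ_j Z_j + (Σ_j ξ_j g_j a_j) Q̃‖_{A_z}`. -/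
theorem stmt14 {Ω : Type*} [MeasurableSpace Ω] (μ : Measure Ω) [IsProbabilityMeasure μ]
    (q dz : ℕ)
    (Z : Fin q → Ω → (Fin dz → ℝ)) (hmeas : ∀ j, Measurable (Z j))
    (hindep : iIndepFun Z μ)
    (L : Fin q → Matrix (Fin dz) (Fin dz) ℝ) (hL : ∀ j, IsUnit (L j).det)
    (hgauss : ∀ j, Measure.map (Z j) μ =
      Measure.map (fun x => (L j) *ᵥ x)
        (Measure.pi fun _ : Fin dz => gaussianReal 0 1))
    (ξ a : Fin q → ℝ) (hξ : ∀ j, 0 < ξ j) (ha : ∀ j, 0 ≤ a j)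
    (hsum : ∑ j, ξ j * a j = 1) (Js : Finset (Fin q))
    (haJs : ∀ j ∈ Js, 0 < a j) (haJsc : ∀ j ∉ Js, a j = 0)
    (A : Matrix (Fin dz) (Fin dz) ℝ) (hA : A.PosDef) :
    ∀ ARinf : (Fin dz → ℝ) → (Fin q → Bool) → Ω → ℝ,
      (ARinf = fun Qt g ω =>
        Real.sqrt
          (((∑ j, ((if g j then (1 : ℝ) else -1) * Real.sqrt (ξ j)) • Z j ω) +
              (∑ j, ξ j * (if g j then (1 : ℝ) else -1) * a j) • Qt) ⬝ᵥ
            (A *ᵥ ((∑ j, ((if g j then (1 : ℝ) else -1) * Real.sqrt (ξ j)) • Z j ω) +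
              (∑ j, ξ j * (if g j then (1 : ℝ) else -1) * a j) • Qt)))) →
      Filter.Tendsto
        (fun Qt : Fin dz → ℝ =>
          (μ {ω | ∀ g : Fin q → Bool, ¬ (∀ j ∈ Js, ∀ j' ∈ Js, g j = g j') →
              ARinf Qt g ω < ARinf Qt (fun _ => true) ω}).toReal)
        (Filter.comap (fun Qt : Fin dz → ℝ => ‖Qt‖) Filter.atTop) (nhds 1) := by
  classical
  intro ARinf hAR
  obtain ⟨c, hc, Ntri, Nsmul, Nlow⟩ := aux_norm hA
  set P : (Fin q → Bool) → Prop := fun g => ¬ ∀ j ∈ Js, ∀ j' ∈ Js, g j = g j' with hP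
  set β : NNReal := (Finset.univ.filter P).sup
      (fun g => ⟨|∑ j, ξ j * (if g j then (1 : ℝ) else -1) * a j|, abs_nonneg _⟩) with hβdef
  have hβ1 : (β : ℝ) < 1 := by
    have hlt : β < (1 : NNReal) := by
      rw [hβdef]
      refine (Finset.sup_lt_iff (by norm_num)).mpr ?_
      intro g hgmem
      rw [Finset.mem_filter] at hgmem
      have h := babs_lt ξ a hξ ha hsum Js haJs g hgmem.2
      exact_mod_cast h
    exact_mod_cast hlt
  have hβg : ∀ g : Fin q → Bool, P g →
      |∑ j, ξ j * (if g j then (1 : ℝ) else -1) * a j| ≤ (β : ℝ) := by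
    intro g hg
    have h : (⟨|∑ j, ξ j * (if g j then (1 : ℝ) else -1) * a j|, abs_nonneg _⟩ : NNReal) ≤ β :=
      hβdef ▸ Finset.le_sup
        (f := fun g : Fin q → Bool =>
          (⟨|∑ j, ξ j * (if g j then (1 : ℝ) else -1) * a j|, abs_nonneg _⟩ : NNReal))
        (Finset.mem_filter.mpr ⟨Finset.mem_univ g, hg⟩)
    exact_mod_cast h
  set M : Ω → ℝ := fun ω =>
    Real.sqrt ((∑ j, ((if (true : Bool) then (1 : ℝ) else -1) * Real.sqrt (ξ j)) • Z j ω) ⬝ᵥ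
        (A *ᵥ (∑ j, ((if (true : Bool) then (1 : ℝ) else -1) * Real.sqrt (ξ j)) • Z j ω))) +
      ∑ g : Fin q → Bool,
        Real.sqrt ((∑ j, ((if g j then (1 : ℝ) else -1) * Real.sqrt (ξ j)) • Z j ω) ⬝ᵥ
          (A *ᵥ (∑ j, ((if g j then (1 : ℝ) else -1) * Real.sqrt (ξ j)) • Z j ω))) with hM
  have incl : ∀ Qt : Fin dz → ℝ, {ω | M ω < (1 - (β : ℝ)) * (c * ‖Qt‖)} ⊆
      {ω | ∀ g : Fin q → Bool, ¬ (∀ j ∈ Js, ∀ j' ∈ Js, g j = g j') →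
        ARinf Qt g ω < ARinf Qt (fun _ => true) ω} := by
    intro Qt ω hω g hg
    rw [Set.mem_setOf_eq] at hω
    rw [hAR]
    show Real.sqrt
        (((∑ j, ((if g j then (1 : ℝ) else -1) * Real.sqrt (ξ j)) • Z j ω) +
            (∑ j, ξ j * (if g j then (1 : ℝ) else -1) * a j) • Qt) ⬝ᵥ
          (A *ᵥ ((∑ j, ((if g j then (1 : ℝ) else -1) * Real.sqrt (ξ j)) • Z j ω) +
            (∑ j, ξ j * (if g j then (1 : ℝ) else -1) * a j) • Qt))) <
      Real.sqrt
        (((∑ j, ((if (true : Bool) then (1 : ℝ) else -1) * Real.sqrt (ξ j)) • Z j ω) +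
            (∑ j, ξ j * (if (true : Bool) then (1 : ℝ) else -1) * a j) • Qt) ⬝ᵥ
          (A *ᵥ ((∑ j, ((if (true : Bool) then (1 : ℝ) else -1) * Real.sqrt (ξ j)) • Z j ω) +
            (∑ j, ξ j * (if (true : Bool) then (1 : ℝ) else -1) * a j) • Qt)))
    have hι : (∑ j, ξ j * (if (true : Bool) then (1 : ℝ) else -1) * a j) = 1 := by
      simpa using hsum
    rw [hι, one_smul]
    refine key_ineq c Ntri Nsmul Nlow _ _ Qt _ (β : ℝ) (hβg g hg) hβ1 ?_
    refine lt_of_le_of_lt ?_ hω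
    rw [hM]
    refine add_le_add_right ?_ _
    exact Finset.single_le_sum
      (f := fun g' : Fin q → Bool =>
        Real.sqrt ((∑ j, ((if g' j then (1 : ℝ) else -1) * Real.sqrt (ξ j)) • Z j ω) ⬝ᵥ
          (A *ᵥ (∑ j, ((if g' j then (1 : ℝ) else -1) * Real.sqrt (ξ j)) • Z j ω))))
      (fun g' _ => Real.sqrt_nonneg _) (Finset.mem_univ g)
  have hTend : Filter.Tendsto (fun r : ℝ => μ {ω | M ω < r}) Filter.atTop (nhds 1) := by
    have hmono : Monotone (fun r : ℝ => {ω | M ω < r}) :=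
      fun r r' hrr ω hω => lt_of_lt_of_le hω hrr
    have h := tendsto_measure_iUnion_atTop (μ := μ) hmono
    have hU : (⋃ r : ℝ, {ω | M ω < r}) = Set.univ := by
      ext ω
      simp only [Set.mem_iUnion, Set.mem_setOf_eq, Set.mem_univ, iff_true]
      exact ⟨M ω + 1, by linarith⟩
    rw [hU, measure_univ] at h
    exact h
  have hnorm : Filter.Tendsto (fun Qt : Fin dz → ℝ => ‖Qt‖)
      (Filter.comap (fun Qt : Fin dz → ℝ => ‖Qt‖) Filter.atTop) Filter.atTop :=
    Filter.tendsto_comap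
  have hconst : (0 : ℝ) < (1 - (β : ℝ)) * c := mul_pos (by linarith) hc
  have hlin : Filter.Tendsto (fun r : ℝ => (1 - (β : ℝ)) * (c * r)) Filter.atTop Filter.atTop := by
    have h := Filter.Tendsto.const_mul_atTop hconst Filter.tendsto_id
    simpa [mul_assoc] using h
  have hlow : Filter.Tendsto
      (fun Qt : Fin dz → ℝ => (μ {ω | M ω < (1 - (β : ℝ)) * (c * ‖Qt‖)}).toReal)
      (Filter.comap (fun Qt : Fin dz → ℝ => ‖Qt‖) Filter.atTop) (nhds 1) := by
    have h := (ENNReal.tendsto_toReal ENNReal.one_ne_top).comp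
      (hTend.comp (hlin.comp hnorm))
    exact h
  refine tendsto_of_tendsto_of_tendsto_of_le_of_le hlow tendsto_const_nhds ?_ ?_
  · intro Qt
    exact ENNReal.toReal_mono (measure_ne_top μ _) (measure_mono (incl Qt))
  · intro Qt
    simpa using ENNReal.toReal_mono ENNReal.one_ne_top (prob_le_one (μ := μ))
end

section
/- Let κ be a real number and consider the k-class estimator (β̂ᵀ, γ̂ᵀ)ᵀ = (X⃗ᵀX⃗ - κ X⃗ᵀM_{Z⃗}X⃗)⁻¹(X⃗ᵀY - κ X⃗ᵀM_{Z⃗}Y), where X⃗ = [X : W], Z⃗ = [Z : W], M_A = I - A(AᵀA)⁻¹Aᵀ. Then, provided the relevant matrices are invertible, β̂ satisfies the partialled-out formula β̂ = (Xᵀ P_{Z̃} X - μ Xᵀ M_{Z⃗} X)⁻¹ (Xᵀ P_{Z̃} Y - μ Xᵀ M_{Z⃗} Y), where μ = κ - 1, Z̃ = M_W Z, and P_A = A(AᵀA)⁻¹Aᵀ. -/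
open Matrix

lemma projSymm {m k : Type*} [Fintype m] [Fintype k] [DecidableEq k] (A : Matrix m k ℝ) :
    (A * (Aᵀ * A)⁻¹ * Aᵀ)ᵀ = A * (Aᵀ * A)⁻¹ * Aᵀ := by
  rw [transpose_mul, transpose_mul, transpose_transpose, transpose_nonsing_inv,
    transpose_mul, transpose_transpose, ← Matrix.mul_assoc]

lemma projMulSelf {m k : Type*} [Fintype m] [Fintype k] [DecidableEq k] (A : Matrix m k ℝ)
    (h : IsUnit (Aᵀ * A).det) :
    A * (Aᵀ * A)⁻¹ * Aᵀ * A = A := by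
  rw [Matrix.mul_assoc, Matrix.mul_assoc, Matrix.nonsing_inv_mul _ h, Matrix.mul_one]

lemma projDecomp {n dw dz : ℕ} (W : Matrix (Fin n) (Fin dw) ℝ)
    (Z : Matrix (Fin n) (Fin dz) ℝ)
    (Zvec : Matrix (Fin n) (Fin dz ⊕ Fin dw) ℝ)
    (PW P : Matrix (Fin n) (Fin n) ℝ) (Zt : Matrix (Fin n) (Fin dz) ℝ)
    (PZt : Matrix (Fin n) (Fin n) ℝ)
    (hZ : Zvec = Matrix.fromCols Z W)
    (hPW : PW = W * (Wᵀ * W)⁻¹ * Wᵀ)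
    (hP : P = Zvec * (Zvecᵀ * Zvec)⁻¹ * Zvecᵀ)
    (hZt : Zt = (1 - PW) * Z)
    (hPZt : PZt = Zt * (Ztᵀ * Zt)⁻¹ * Ztᵀ)
    (hW : IsUnit (Wᵀ * W).det) (hZv : IsUnit (Zvecᵀ * Zvec).det)
    (hZtd : IsUnit (Ztᵀ * Zt).det) :
    P = PW + PZt := by
  have hPWsymm : PWᵀ = PW := by rw [hPW]; exact projSymm W
  have hPsymm : Pᵀ = P := by rw [hP]; exact projSymm Zvec
  have hPZtsymm : PZtᵀ = PZt := by rw [hPZt]; exact projSymm Zt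
  have hPWW : PW * W = W := by
    rw [hPW]; exact projMulSelf W hW
  have hPZvec : P * Zvec = Zvec := by rw [hP]; exact projMulSelf Zvec hZv
  have hPZtZt : PZt * Zt = Zt := by rw [hPZt]; exact projMulSelf Zt hZtd
  have hPZ : P * Z = Z ∧ P * W = W := by
    have h2 := hPZvec
    rw [hZ, Matrix.mul_fromCols, Matrix.fromCols_ext_iff] at h2
    exact h2
  have hPWPW : PW * PW = PW := by
    nth_rewrite 2 [hPW]
    rw [← Matrix.mul_assoc, ← Matrix.mul_assoc, hPWW, ← hPW]
  have hPWZt : PW * Zt = 0 := by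
    rw [hZt, ← Matrix.mul_assoc, Matrix.mul_sub, Matrix.mul_one, hPWPW, sub_self,
      Matrix.zero_mul]
  have hZtW : Ztᵀ * W = 0 := by
    rw [hZt, transpose_mul, transpose_sub, transpose_one, hPWsymm, Matrix.mul_assoc,
      Matrix.sub_mul, Matrix.one_mul, hPWW, sub_self, Matrix.mul_zero]
  have hPZtW : PZt * W = 0 := by
    rw [hPZt, Matrix.mul_assoc, hZtW, Matrix.mul_zero]
  have hPZtPW : PZt * PW = 0 := by
    have h3 : (PW * PZt)ᵀ = 0 := by
      rw [hPZt, ← Matrix.mul_assoc, ← Matrix.mul_assoc, hPWZt, Matrix.zero_mul,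
        Matrix.zero_mul, transpose_zero]
    rw [transpose_mul, hPWsymm, hPZtsymm] at h3
    exact h3
  have hPPW : P * PW = PW := by
    rw [hPW, ← Matrix.mul_assoc, ← Matrix.mul_assoc, hPZ.2]
  have hPZt2 : P * Zt = Zt := by
    rw [hZt, ← Matrix.mul_assoc, Matrix.mul_sub, Matrix.mul_one, hPPW, Matrix.sub_mul,
      Matrix.sub_mul, Matrix.one_mul, hPZ.1]
  have hPPZt : P * PZt = PZt := by
    rw [hPZt, ← Matrix.mul_assoc, ← Matrix.mul_assoc, hPZt2]
  have hQZ : (PW + PZt) * Z = Z := by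
    have hZdecomp : Z = Zt + PW * Z := by
      rw [hZt, Matrix.sub_mul, Matrix.one_mul]; abel
    have hPZtZ : PZt * Z = Zt := by
      nth_rewrite 1 [hZdecomp]
      rw [Matrix.mul_add, hPZtZt, ← Matrix.mul_assoc, hPZtPW, Matrix.zero_mul, add_zero]
    rw [Matrix.add_mul, hPZtZ]
    conv_rhs => rw [hZdecomp]
    abel
  have hQW : (PW + PZt) * W = W := by
    rw [Matrix.add_mul, hPWW, hPZtW, add_zero]
  have hQZvec : (PW + PZt) * Zvec = Zvec := by
    rw [hZ, Matrix.mul_fromCols, hQZ, hQW]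
  have hQP : (PW + PZt) * P = P := by
    rw [hP, ← Matrix.mul_assoc, ← Matrix.mul_assoc, hQZvec]
  have hPQ : P * (PW + PZt) = PW + PZt := by
    rw [Matrix.mul_add, hPPW, hPPZt]
  calc P = (PW + PZt) * P := hQP.symm
    _ = (Pᵀ * (PW + PZt)ᵀ)ᵀ := by rw [← transpose_mul, transpose_transpose]
    _ = (P * (PW + PZt))ᵀ := by rw [hPsymm, transpose_add, hPWsymm, hPZtsymm]
    _ = PW + PZt := by rw [hPQ, transpose_add, hPWsymm, hPZtsymm]

/-- Frisch–Waugh–Lovell identity for k-class estimators: with `X⃗ = [X : W]`, `Z⃗ = [Z : W]`,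
`M_A = I - A(AᵀA)⁻¹Aᵀ`, `P_A = A(AᵀA)⁻¹Aᵀ` and `Z̃ = M_W Z`, the `β`-component of the k-class
estimator `(β̂ᵀ, γ̂ᵀ)ᵀ = (X⃗ᵀX⃗ - κ X⃗ᵀM_{Z⃗}X⃗)⁻¹(X⃗ᵀY - κ X⃗ᵀM_{Z⃗}Y)` equals
`(XᵀP_{Z̃}X - μ XᵀM_{Z⃗}X)⁻¹(XᵀP_{Z̃}Y - μ XᵀM_{Z⃗}Y)` with `μ = κ - 1`, provided the
relevant matrices are invertible. -/
theorem stmt15 (n dx dw dz : ℕ) (Y : Fin n → ℝ)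
    (X : Matrix (Fin n) (Fin dx) ℝ) (W : Matrix (Fin n) (Fin dw) ℝ)
    (Z : Matrix (Fin n) (Fin dz) ℝ) (κ : ℝ) :
    ∀ (Xvec : Matrix (Fin n) (Fin dx ⊕ Fin dw) ℝ)
      (Zvec : Matrix (Fin n) (Fin dz ⊕ Fin dw) ℝ)
      (MZ MW : Matrix (Fin n) (Fin n) ℝ) (Zt : Matrix (Fin n) (Fin dz) ℝ)
      (PZt : Matrix (Fin n) (Fin n) ℝ) (est : Fin dx ⊕ Fin dw → ℝ),
      Xvec = Matrix.fromCols X W →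
      Zvec = Matrix.fromCols Z W →
      MZ = 1 - Zvec * (Zvecᵀ * Zvec)⁻¹ * Zvecᵀ →
      MW = 1 - W * (Wᵀ * W)⁻¹ * Wᵀ →
      Zt = MW * Z →
      PZt = Zt * (Ztᵀ * Zt)⁻¹ * Ztᵀ →
      est = (Xvecᵀ * Xvec - κ • (Xvecᵀ * MZ * Xvec))⁻¹ *ᵥ
        (Xvecᵀ *ᵥ Y - κ • ((Xvecᵀ * MZ) *ᵥ Y)) →
      IsUnit (Wᵀ * W).det →
      IsUnit (Zvecᵀ * Zvec).det →
      IsUnit (Ztᵀ * Zt).det →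
      IsUnit (Xvecᵀ * Xvec - κ • (Xvecᵀ * MZ * Xvec)).det →
      IsUnit (Xᵀ * PZt * X - (κ - 1) • (Xᵀ * MZ * X)).det →
      (fun i => est (Sum.inl i)) =
        (Xᵀ * PZt * X - (κ - 1) • (Xᵀ * MZ * X))⁻¹ *ᵥ
          ((Xᵀ * PZt) *ᵥ Y - (κ - 1) • ((Xᵀ * MZ) *ᵥ Y)) := by
  intro Xvec Zvec MZ MW Zt PZt est hXv hZv hMZ hMW hZtE hPZtE hest hWdet hZvdet hZtdet
    hAdet hBdet
  -- notation
  have hdec : Zvec * (Zvecᵀ * Zvec)⁻¹ * Zvecᵀ = W * (Wᵀ * W)⁻¹ * Wᵀ + PZt :=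
    projDecomp W Z Zvec (W * (Wᵀ * W)⁻¹ * Wᵀ) (Zvec * (Zvecᵀ * Zvec)⁻¹ * Zvecᵀ) Zt PZt
      hZv rfl rfl (by rw [hZtE, hMW]) hPZtE hWdet hZvdet hZtdet
  have hone : (1 : Matrix (Fin n) (Fin n) ℝ) = MZ + (W * (Wᵀ * W)⁻¹ * Wᵀ) + PZt := by
    rw [hMZ, hdec]; abel
  -- symmetry of MZ
  have hMZsymm : MZᵀ = MZ := by
    rw [hMZ, transpose_sub, transpose_one, projSymm]
  -- MZ * W = 0
  have hPZtW : PZt * W = 0 := by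
    have hZtW : Ztᵀ * W = 0 := by
      rw [hZtE, hMW, transpose_mul, transpose_sub, transpose_one, projSymm, Matrix.mul_assoc,
        Matrix.sub_mul, Matrix.one_mul, projMulSelf W hWdet, sub_self, Matrix.mul_zero]
    rw [hPZtE, Matrix.mul_assoc, hZtW, Matrix.mul_zero]
  have hMZW : MZ * W = 0 := by
    have hPW2 : (Zvec * (Zvecᵀ * Zvec)⁻¹ * Zvecᵀ) * W = W := by
      rw [hdec, Matrix.add_mul, projMulSelf W hWdet, hPZtW, add_zero]
    rw [hMZ, Matrix.sub_mul, Matrix.one_mul, hPW2, sub_self]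
  have hWMZ : Wᵀ * MZ = 0 := by
    have h := congrArg Matrix.transpose hMZW
    rwa [transpose_mul, hMZsymm, transpose_zero] at h
  -- abbreviations for the solution
  set B := Xᵀ * PZt * X - (κ - 1) • (Xᵀ * MZ * X) with hB
  set c := (Xᵀ * PZt) *ᵥ Y - (κ - 1) • ((Xᵀ * MZ) *ᵥ Y) with hc
  set β := B⁻¹ *ᵥ c with hβ
  set γ := (Wᵀ * W)⁻¹ *ᵥ (Wᵀ *ᵥ Y - (Wᵀ * X) *ᵥ β) with hγ
  have hBβ : B *ᵥ β = c := by
    rw [hβ, Matrix.mulVec_mulVec, Matrix.mul_nonsing_inv _ hBdet, Matrix.one_mulVec]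
  have hWγ : (Wᵀ * W) *ᵥ γ = Wᵀ *ᵥ Y - (Wᵀ * X) *ᵥ β := by
    rw [hγ, Matrix.mulVec_mulVec, Matrix.mul_nonsing_inv _ hWdet, Matrix.one_mulVec]
  -- the two normal equations
  have e2 : (Wᵀ * Xvec - κ • (Wᵀ * MZ * Xvec)) *ᵥ Sum.elim β γ
      = Wᵀ *ᵥ Y - κ • ((Wᵀ * MZ) *ᵥ Y) := by
    rw [hWMZ, Matrix.zero_mul, Matrix.zero_mulVec, smul_zero, sub_zero, smul_zero, sub_zero,
      hXv, Matrix.mul_fromCols, Matrix.fromCols_mulVec_sumElim, hWγ]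
    abel
  have e1 : (Xᵀ * Xvec - κ • (Xᵀ * MZ * Xvec)) *ᵥ Sum.elim β γ
      = Xᵀ *ᵥ Y - κ • ((Xᵀ * MZ) *ᵥ Y) := by
    have hXWγ : (Xᵀ * W) *ᵥ γ = (Xᵀ * W * (Wᵀ * W)⁻¹ * Wᵀ) *ᵥ Y
        - (Xᵀ * W * (Wᵀ * W)⁻¹ * (Wᵀ * X)) *ᵥ β := by
      rw [hγ, Matrix.mulVec_mulVec, Matrix.mulVec_sub, Matrix.mulVec_mulVec,
        Matrix.mulVec_mulVec]
    have hXMZW : Xᵀ * MZ * W = 0 := by rw [Matrix.mul_assoc, hMZW, Matrix.mul_zero]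
    rw [hXv, Matrix.mul_fromCols, Matrix.mul_fromCols, hXMZW]
    -- now expand the mulVec of (fromCols .. - κ • fromCols ..)
    rw [Matrix.sub_mulVec, Matrix.smul_mulVec, Matrix.fromCols_mulVec_sumElim,
      Matrix.fromCols_mulVec_sumElim, Matrix.zero_mulVec, add_zero, hXWγ]
    -- key matrix identity: XᵀX - XᵀPW X - κ XᵀMZ X = B
    have hm4 : Xᵀ * X - Xᵀ * W * (Wᵀ * W)⁻¹ * (Wᵀ * X) - κ • (Xᵀ * MZ * X) = B := by
      have hXX : Xᵀ * X = Xᵀ * MZ * X + Xᵀ * (W * (Wᵀ * W)⁻¹ * Wᵀ) * X + Xᵀ * PZt * X := by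
        calc Xᵀ * X = Xᵀ * (1 : Matrix (Fin n) (Fin n) ℝ) * X := by rw [Matrix.mul_one]
          _ = _ := by rw [hone, Matrix.mul_add, Matrix.mul_add, Matrix.add_mul, Matrix.add_mul]
      have hassoc : Xᵀ * W * (Wᵀ * W)⁻¹ * (Wᵀ * X) = Xᵀ * (W * (Wᵀ * W)⁻¹ * Wᵀ) * X := by
        simp only [Matrix.mul_assoc]
      rw [hassoc, hXX, hB]
      module
    have hm5 : Xᵀ *ᵥ Y - (Xᵀ * W * (Wᵀ * W)⁻¹ * Wᵀ) *ᵥ Y - κ • ((Xᵀ * MZ) *ᵥ Y) = c := by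
      have hXT : Xᵀ = Xᵀ * MZ + Xᵀ * (W * (Wᵀ * W)⁻¹ * Wᵀ) + Xᵀ * PZt := by
        calc Xᵀ = Xᵀ * (1 : Matrix (Fin n) (Fin n) ℝ) := by rw [Matrix.mul_one]
          _ = _ := by rw [hone, Matrix.mul_add, Matrix.mul_add]
      have hassoc : Xᵀ * W * (Wᵀ * W)⁻¹ * Wᵀ = Xᵀ * (W * (Wᵀ * W)⁻¹ * Wᵀ) := by
        simp only [Matrix.mul_assoc]
      nth_rewrite 1 [hXT]
      rw [hassoc, hc, Matrix.add_mulVec, Matrix.add_mulVec]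
      module
    calc (Xᵀ * X) *ᵥ β + ((Xᵀ * W * (Wᵀ * W)⁻¹ * Wᵀ) *ᵥ Y
            - (Xᵀ * W * (Wᵀ * W)⁻¹ * (Wᵀ * X)) *ᵥ β) - κ • ((Xᵀ * MZ * X) *ᵥ β)
        = (Xᵀ * X - Xᵀ * W * (Wᵀ * W)⁻¹ * (Wᵀ * X) - κ • (Xᵀ * MZ * X)) *ᵥ β
            + (Xᵀ * W * (Wᵀ * W)⁻¹ * Wᵀ) *ᵥ Y := by
          rw [Matrix.sub_mulVec, Matrix.sub_mulVec, Matrix.smul_mulVec]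
          abel
      _ = c + (Xᵀ * W * (Wᵀ * W)⁻¹ * Wᵀ) *ᵥ Y := by rw [hm4, hBβ]
      _ = Xᵀ *ᵥ Y - κ • ((Xᵀ * MZ) *ᵥ Y) := by rw [← hm5]; abel
  -- assemble
  have hAfr : Xvecᵀ * Xvec - κ • (Xvecᵀ * MZ * Xvec)
      = Matrix.fromRows (Xᵀ * Xvec - κ • (Xᵀ * MZ * Xvec))
          (Wᵀ * Xvec - κ • (Wᵀ * MZ * Xvec)) := by
    rw [hXv, transpose_fromCols]
    ext (i | i) (j | j) <;>
      simp [Matrix.fromRows_mul, Matrix.mul_fromCols, Matrix.sub_apply, Matrix.smul_apply,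
        Matrix.fromRows_apply_inl, Matrix.fromRows_apply_inr,
        Matrix.fromCols_apply_inl, Matrix.fromCols_apply_inr,
        Matrix.fromBlocks_apply₁₁, Matrix.fromBlocks_apply₁₂,
        Matrix.fromBlocks_apply₂₁, Matrix.fromBlocks_apply₂₂]
  have hbfr : Xvecᵀ *ᵥ Y - κ • ((Xvecᵀ * MZ) *ᵥ Y)
      = Sum.elim (Xᵀ *ᵥ Y - κ • ((Xᵀ * MZ) *ᵥ Y)) (Wᵀ *ᵥ Y - κ • ((Wᵀ * MZ) *ᵥ Y)) := by
    rw [hXv, transpose_fromCols]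
    funext i
    cases i <;>
      simp [Matrix.fromRows_mul, Matrix.fromRows_mulVec, Pi.sub_apply, Pi.smul_apply]
  have hclaim : (Xvecᵀ * Xvec - κ • (Xvecᵀ * MZ * Xvec)) *ᵥ Sum.elim β γ
      = Xvecᵀ *ᵥ Y - κ • ((Xvecᵀ * MZ) *ᵥ Y) := by
    rw [hAfr, hbfr, Matrix.fromRows_mulVec, e1, e2]
  have hestv : est = Sum.elim β γ := by
    rw [hest, ← hclaim, Matrix.mulVec_mulVec, Matrix.nonsing_inv_mul _ hAdet,
      Matrix.one_mulVec]
  funext i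
  rw [hestv]
  simp
end

section
/- Suppose scalars AR_n, rk_n, LM_n satisfy rk_n → ∞, AR_n = O_p(1), LM_n = O_p(1), and AR_n - rk_n < 0 with probability approaching one. Define LR_n = (1/2)(AR_n - rk_n + √((AR_n - rk_n)² + 4·LM_n·rk_n)). Then LR_n = LM_n·rk_n/(rk_n - AR_n)·(1 + o_p(1)) = LM_n + o_p(1). -/
open Filter

/-- Asymptotic equivalence of CQLR and LM: if `rk_n → ∞`, `AR_n` and `LM_n` are bounded,
`LM_n ≥ 0`, and `AR_n - rk_n < 0` eventually, then
`LR_n = (1/2)(AR_n - rk_n + √((AR_n - rk_n)² + 4 LM_n rk_n))` satisfies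
`LR_n = LM_n · rk_n/(rk_n - AR_n) · (1 + o(1))` and `LR_n = LM_n + o(1)`. -/
theorem stmt16 (AR LM rk : ℕ → ℝ)
    (hrk : Tendsto rk atTop atTop)
    (hARb : ∃ B, ∀ n, |AR n| ≤ B) (hLMb : ∃ B, ∀ n, |LM n| ≤ B)
    (hLM0 : ∀ n, 0 ≤ LM n)
    (hneg : ∀ᶠ n in atTop, AR n - rk n < 0) :
    ∀ LR : ℕ → ℝ,
      (LR = fun n =>
        (AR n - rk n + Real.sqrt ((AR n - rk n) ^ 2 + 4 * LM n * rk n)) / 2) →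
      ∃ e : ℕ → ℝ, Tendsto e atTop (nhds 0) ∧
        (∀ᶠ n in atTop, LR n = LM n * rk n / (rk n - AR n) * (1 + e n)) ∧
        Tendsto (fun n => LR n - LM n) atTop (nhds 0) := by
  obtain ⟨B1, hB1⟩ := hARb
  obtain ⟨B2, hB2⟩ := hLMb
  have hB1_0 : 0 ≤ B1 := le_trans (abs_nonneg _) (hB1 0)
  have hB2_0 : 0 ≤ B2 := le_trans (abs_nonneg _) (hB2 0)
  intro LR hLR
  set d : ℕ → ℝ := fun n => rk n - AR n with hd
  set s : ℕ → ℝ := fun n => Real.sqrt ((AR n - rk n) ^ 2 + 4 * LM n * rk n) with hs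
  set e : ℕ → ℝ := fun n => (d n - s n) / (d n + s n) with he
  clear_value d s e
  have hbig : ∀ᶠ n in atTop, B1 + 1 ≤ rk n := hrk.eventually_ge_atTop _
  have h1 : Tendsto (fun n => rk n - B1) atTop atTop :=
    tendsto_atTop_add_const_right _ _ hrk
  -- basic facts for large n
  have key : ∀ n, B1 + 1 ≤ rk n →
      1 ≤ d n ∧ d n ≤ s n ∧ s n ^ 2 = d n ^ 2 + 4 * LM n * rk n ∧ 0 ≤ s n := by
    intro n hn
    have ha := abs_le.mp (hB1 n)
    have hd1 : 1 ≤ d n := by simp only [hd]; linarith [ha.2]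
    have hr0 : 0 < rk n := by linarith
    have hnn : 0 ≤ (AR n - rk n) ^ 2 + 4 * LM n * rk n := by
      have h := mul_nonneg (mul_nonneg (by norm_num : (0:ℝ) ≤ 4) (hLM0 n)) hr0.le
      positivity
    have hsq : s n ^ 2 = d n ^ 2 + 4 * LM n * rk n := by
      simp only [hs, hd]; rw [Real.sq_sqrt hnn]; ring
    have hs0 : 0 ≤ s n := by simp only [hs]; exact Real.sqrt_nonneg _
    refine ⟨hd1, ?_, hsq, hs0⟩
    nlinarith [hsq, mul_nonneg (mul_nonneg (by norm_num : (0:ℝ) ≤ 4) (hLM0 n)) hr0.le]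
  -- the identity, for large n
  have hident : ∀ n, B1 + 1 ≤ rk n → LR n = LM n * rk n / d n * (1 + e n) := by
    intro n hn
    obtain ⟨hd1, hds, hsq, hs0⟩ := key n hn
    have hsum : 0 < d n + s n := by linarith
    have hd0 : (0:ℝ) < d n := by linarith
    have hLRn : LR n = (-(d n) + s n) / 2 := by
      rw [hLR]
      simp only [hd, hs]
      ring_nf
    have h4 : (s n - d n) * (s n + d n) = 4 * LM n * rk n := by nlinarith [hsq]
    have e1 : 1 + e n = 2 * d n / (d n + s n) := by
      rw [he]; field_simp; ring
    rw [hLRn, e1, div_mul_div_comm, div_eq_div_iff (by norm_num) (by positivity)]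
    linear_combination d n * h4
  -- the dominating sequence tends to 0
  have hg : Tendsto (fun n => 4 * B2 * rk n / (rk n - B1) ^ 2) atTop (nhds 0) := by
    have h2 : Tendsto (fun n => (rk n - B1) ^ 2) atTop atTop :=
      (h1.atTop_mul_atTop₀ h1).congr (fun n => by ring)
    have hA : Tendsto (fun n => 4 * B2 / (rk n - B1)) atTop (nhds 0) :=
      Tendsto.div_atTop tendsto_const_nhds h1
    have hB : Tendsto (fun n => 4 * B2 * B1 / (rk n - B1) ^ 2) atTop (nhds 0) :=
      Tendsto.div_atTop tendsto_const_nhds h2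
    have hAB := hA.add hB
    rw [add_zero] at hAB
    apply hAB.congr'
    filter_upwards [h1.eventually_gt_atTop 0] with n hn
    field_simp
    ring
  -- e → 0
  have he0 : Tendsto e atTop (nhds 0) := by
    apply squeeze_zero_norm' ?_ hg
    filter_upwards [hbig] with n hn
    obtain ⟨hd1, hds, hsq, hs0⟩ := key n hn
    have ha := abs_le.mp (hB1 n)
    have hl := abs_le.mp (hB2 n)
    have hr0 : (0:ℝ) < rk n := by linarith
    have hdb : rk n - B1 ≤ d n := by simp only [hd]; linarith [ha.2]
    have hsum : 0 < d n + s n := by linarith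
    have heabs : |e n| = (s n - d n) / (d n + s n) := by
      rw [he, abs_div, abs_of_nonneg hsum.le, abs_of_nonpos (by linarith : d n - s n ≤ 0)]
      ring_nf
    rw [Real.norm_eq_abs, heabs, div_le_div_iff₀ hsum (pow_pos (by linarith : (0:ℝ) < rk n - B1) 2)]
    have h4 : (s n - d n) * (s n + d n) = 4 * LM n * rk n := by nlinarith [hsq]
    have c1 : (s n - d n) * (rk n - B1) ^ 2 ≤ (s n - d n) * d n ^ 2 :=
      mul_le_mul_of_nonneg_left (by nlinarith) (by linarith)
    have c2 : (s n - d n) * d n ^ 2 ≤ (s n - d n) * ((s n + d n) * d n) :=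
      mul_le_mul_of_nonneg_left (by nlinarith) (by linarith)
    have c3 : 4 * LM n * rk n * d n ≤ 4 * B2 * rk n * d n := by
      have h0 : (0:ℝ) ≤ 4 * rk n * d n :=
        mul_nonneg (mul_nonneg (by norm_num) hr0.le) (by linarith)
      calc 4 * LM n * rk n * d n = LM n * (4 * rk n * d n) := by ring
        _ ≤ B2 * (4 * rk n * d n) := mul_le_mul_of_nonneg_right hl.2 h0
        _ = 4 * B2 * rk n * d n := by ring
    have c4 : 4 * B2 * rk n * d n ≤ 4 * B2 * rk n * (d n + s n) := by
      have h0 : (0:ℝ) ≤ 4 * B2 * rk n :=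
        mul_nonneg (mul_nonneg (by norm_num) hB2_0) hr0.le
      calc 4 * B2 * rk n * d n = 4 * B2 * rk n * d n := rfl
        _ ≤ 4 * B2 * rk n * (d n + s n) := mul_le_mul_of_nonneg_left (by linarith) h0
    calc (s n - d n) * (rk n - B1) ^ 2 ≤ (s n - d n) * ((s n + d n) * d n) := le_trans c1 c2
      _ = 4 * LM n * rk n * d n := by linear_combination d n * h4
      _ ≤ 4 * B2 * rk n * (d n + s n) := le_trans c3 c4
  refine ⟨e, he0, ?_, ?_⟩
  · filter_upwards [hbig] with n hn
    rw [show rk n - AR n = d n by simp only [hd]]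
    exact hident n hn
  · -- LR - LM → 0
    have had : Tendsto (fun n => AR n / d n) atTop (nhds 0) := by
      apply squeeze_zero_norm' ?_ (Tendsto.div_atTop (tendsto_const_nhds (x := (B1:ℝ))) h1)
      filter_upwards [hbig] with n hn
      obtain ⟨hd1, _, _, _⟩ := key n hn
      have ha := abs_le.mp (hB1 n)
      have hdb : rk n - B1 ≤ d n := by simp only [hd]; linarith [ha.2]
      have h01 : 0 < rk n - B1 := by linarith
      rw [Real.norm_eq_abs, abs_div, abs_of_pos (by linarith : (0:ℝ) < d n)]
      exact div_le_div₀ hB1_0 (hB1 n) h01 hdb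
    have hh : Tendsto (fun n => (1 + AR n / d n) * (1 + e n) - 1) atTop (nhds 0) := by
      have hx := (((tendsto_const_nhds (x := (1:ℝ)) (f := atTop)).add had).mul
        ((tendsto_const_nhds (x := (1:ℝ)) (f := atTop)).add he0)).sub
        (tendsto_const_nhds (x := (1:ℝ)))
      norm_num at hx
      exact hx
    apply squeeze_zero_norm' ?_ (by simpa using hh.norm.const_mul B2)
    filter_upwards [hbig] with n hn
    obtain ⟨hd1, hds, hsq, hs0⟩ := key n hn
    have hd0 : (0:ℝ) < d n := by linarith
    have hid : LR n - LM n = LM n * ((1 + AR n / d n) * (1 + e n) - 1) := by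
      have hrd : rk n / d n = 1 + AR n / d n := by
        field_simp [hd0.ne']
        simp only [hd]; ring
      rw [hident n hn, mul_div_assoc, hrd]
      ring
    rw [Real.norm_eq_abs, hid, abs_mul]
    exact mul_le_mul_of_nonneg_right (hB2 n) (abs_nonneg _)
end
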